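/- Let Γ > 0, δ² > 0, and V_max ≥ δ²Γ be real numbers, define the natural number M = ⌊ log(V_max/(δ²Γ)) / log(1+Γ) + 1 ⌋, and for 1 ≤ m ≤ M set V_m = V_max/(1+Γ)^{M-m}. Then this sequence is feasible: V_1 ≥ Γδ², V_m ≥ Γ(∑_{x=1}^{m-1} V_x + δ²) for every 2 ≤ m ≤ M, the sequence is strictly increasing, and V_M = V_max. -/

import Mathlib

/-- Achievability: with M = ⌊log(V_max/(δ²Γ))/log(1+Γ) + 1⌋ and the geometric design
V_m = V_max/(1+Γ)^{M-m}, the power levels are SIC-feasible, strictly increasing,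
and the top level equals V_max. -/
theorem stmt_6 (Γ δ2 Vmax : ℝ) (hΓ : 0 < Γ) (hδ : 0 < δ2) (hVmax : δ2 * Γ ≤ Vmax)
    (M : ℕ) (hM : (M : ℤ) = ⌊Real.log (Vmax / (δ2 * Γ)) / Real.log (1 + Γ) + 1⌋)
    (V : ℕ → ℝ)
    (hV : ∀ m : ℕ, 1 ≤ m → m ≤ M → V m = Vmax / (1 + Γ) ^ (M - m)) :
    V 1 ≥ Γ * δ2 ∧
    (∀ m : ℕ, 2 ≤ m → m ≤ M → V m ≥ Γ * ((∑ x ∈ Finset.Icc 1 (m - 1), V x) + δ2)) ∧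
    (∀ m : ℕ, 2 ≤ m → m ≤ M → V (m - 1) < V m) ∧
    V M = Vmax := by
  have ht : (1 : ℝ) < 1 + Γ := by linarith
  have htp : (0 : ℝ) < 1 + Γ := by linarith
  have hδΓ : 0 < δ2 * Γ := mul_pos hδ hΓ
  have hVpos : 0 < Vmax := lt_of_lt_of_le hδΓ hVmax
  have hR1 : (1 : ℝ) ≤ Vmax / (δ2 * Γ) := (one_le_div hδΓ).mpr hVmax
  have hlogR : 0 ≤ Real.log (Vmax / (δ2 * Γ)) := Real.log_nonneg hR1
  have hL : 0 < Real.log (1 + Γ) := Real.log_pos ht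
  have hM' : (M : ℤ) = ⌊Real.log (Vmax / (δ2 * Γ)) / Real.log (1 + Γ)⌋ + 1 := by
    rw [hM, Int.floor_add_one]
  have hM1 : 1 ≤ M := by
    have h0 : (0 : ℤ) ≤ ⌊Real.log (Vmax / (δ2 * Γ)) / Real.log (1 + Γ)⌋ :=
      Int.floor_nonneg.mpr (div_nonneg hlogR hL.le)
    omega
  -- key inequality : δ2 * Γ * (1+Γ)^(M-1) ≤ Vmax
  have key : δ2 * Γ * (1 + Γ) ^ (M - 1) ≤ Vmax := by
    have hfloor : ((M : ℝ) - 1) ≤ Real.log (Vmax / (δ2 * Γ)) / Real.log (1 + Γ) := by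
      have h2 : ((M : ℤ) - 1 : ℤ) = ⌊Real.log (Vmax / (δ2 * Γ)) / Real.log (1 + Γ)⌋ := by omega
      have h3 := Int.floor_le (Real.log (Vmax / (δ2 * Γ)) / Real.log (1 + Γ))
      rw [← h2] at h3
      push_cast at h3
      exact h3
    have h1 : ((M : ℝ) - 1) * Real.log (1 + Γ) ≤ Real.log (Vmax / (δ2 * Γ)) :=
      (le_div_iff₀ hL).mp hfloor
    have h2 : Real.log ((1 + Γ) ^ (M - 1)) ≤ Real.log (Vmax / (δ2 * Γ)) := by
      rw [Real.log_pow]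
      have : ((M - 1 : ℕ) : ℝ) = (M : ℝ) - 1 := by
        push_cast [hM1]; ring
      rw [this]; exact h1
    have h3 : (1 + Γ) ^ (M - 1) ≤ Vmax / (δ2 * Γ) :=
      (Real.log_le_log_iff (pow_pos htp _) (by positivity)).mp h2
    calc δ2 * Γ * (1 + Γ) ^ (M - 1) ≤ δ2 * Γ * (Vmax / (δ2 * Γ)) := by
          exact mul_le_mul_of_nonneg_left h3 hδΓ.le
      _ = Vmax := by field_simp
  -- main feasibility statement by induction
  have main : ∀ m : ℕ, 1 ≤ m → m ≤ M →
      Γ * ((∑ x ∈ Finset.Icc 1 (m - 1), V x) + δ2) ≤ V m := by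
    intro m hm
    induction m, hm using Nat.le_induction with
    | base =>
      intro h1M
      rw [show (1:ℕ) - 1 = 0 from rfl, show Finset.Icc 1 0 = ∅ from rfl,
        Finset.sum_empty, zero_add]
      rw [hV 1 le_rfl h1M]
      rw [le_div_iff₀ (pow_pos htp _)]
      calc Γ * δ2 * (1 + Γ) ^ (M - 1) = δ2 * Γ * (1 + Γ) ^ (M - 1) := by ring
        _ ≤ Vmax := key
    | succ n hn ih =>
      intro hnM
      have hn' : n ≤ M := Nat.le_of_succ_le hnM
      have ihn := ih hn'
      have hsum : (∑ x ∈ Finset.Icc 1 (n + 1 - 1), V x)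
          = (∑ x ∈ Finset.Icc 1 (n - 1), V x) + V n := by
        rw [show n + 1 - 1 = (n - 1) + 1 by omega]
        rw [Finset.sum_Icc_succ_top (by omega : 1 ≤ n - 1 + 1)]
        rw [show n - 1 + 1 = n by omega]
      rw [hsum]
      have hVn := hV n hn hn'
      have hVn1 := hV (n + 1) (by omega) hnM
      have hpow : (1 + Γ) ^ (M - n) = (1 + Γ) ^ (M - (n + 1)) * (1 + Γ) := by
        rw [← pow_succ]
        congr 1
        omega
      have hVstep : (1 + Γ) * V n = V (n + 1) := by
        rw [hVn, hVn1, hpow]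
        field_simp
      have hVnpos : 0 ≤ V n := by rw [hVn]; positivity
      calc Γ * ((∑ x ∈ Finset.Icc 1 (n - 1), V x) + V n + δ2)
          = Γ * ((∑ x ∈ Finset.Icc 1 (n - 1), V x) + δ2) + Γ * V n := by ring
        _ ≤ V n + Γ * V n := by linarith
        _ = (1 + Γ) * V n := by ring
        _ = V (n + 1) := hVstep
  refine ⟨?_, ?_, ?_, ?_⟩
  · have := main 1 le_rfl hM1
    rw [show (1:ℕ) - 1 = 0 from rfl, show Finset.Icc 1 0 = ∅ from rfl,
      Finset.sum_empty, zero_add] at this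
    exact this
  · intro m h2m hmM
    exact main m (by omega) hmM
  · intro m h2m hmM
    rw [hV (m - 1) (by omega) (by omega), hV m (by omega) hmM]
    apply div_lt_div_of_pos_left hVpos (pow_pos htp _)
    apply pow_lt_pow_right₀ ht
    omega
  · rw [hV M hM1 le_rfl, Nat.sub_self, pow_zero, div_one]
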